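/- Let S = {AA, CC, AC, CA, TC} ⊂ D^2. Every word of length 2n formed by concatenating n blocks from S is 3-SSA. -/

import Mathlib

inductive Base : Type
  | A | T | C | G
deriving DecidableEq, Repr

open Base

def bcompl : Base → Base
  | A => T
  | T => A
  | C => G
  | G => C

/-- Reverse-complement of a DNA word. -/
def RC (w : List Base) : List Base := w.reverse.map bcompl

/-- The contiguous factor of `x` starting at index `i` of length `k`. -/
def factor (x : List Base) (i k : ℕ) : List Base := (x.drop i).take k

/-- `x` is `m`-SSA: for all `k ≥ m` there is no pair of non-overlapping
contiguous factors of length `k`, one the reverse-complement of the other. -/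
def SSA (m : ℕ) (x : List Base) : Prop :=
  ∀ k, m ≤ k → ∀ i j, i + k ≤ x.length → j + k ≤ x.length →
    (i + k ≤ j ∨ j + k ≤ i) → factor x i k ≠ RC (factor x j k)

lemma getElem_idx_congr (l : List Base) {a b : ℕ} (h : a = b) (ha : a < l.length) :
    l[a] = l[b]'(h ▸ ha) := by subst h; rfl

lemma factor_length {x : List Base} {i k : ℕ} (h : i + k ≤ x.length) :
    (factor x i k).length = k := by
  simp [factor]; omega

lemma factor_getElem {x : List Base} {i k m : ℕ}
    (h1 : m < (factor x i k).length) (h2 : i + m < x.length) :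
    (factor x i k)[m] = x[i + m] := by
  simp [factor, List.getElem_take, List.getElem_drop]

lemma eq_RC_getElem {w : List Base} {i j k m p q : ℕ} (hm : m < k)
    (hq : q = i + m) (hp : p = j + (k - 1 - m))
    (hik : i + k ≤ w.length) (hjk : j + k ≤ w.length)
    (heq : factor w i k = RC (factor w j k))
    (h1 : q < w.length) (h2 : p < w.length) :
    w[q] = bcompl (w[p]) := by
  subst hq hp
  have hl1 : (factor w i k).length = k := factor_length hik
  have hl2 : (factor w j k).length = k := factor_length hjk
  have hm1 : m < (factor w i k).length := by omega
  have key : (factor w i k)[m]'hm1 = (RC (factor w j k))[m]'(heq ▸ hm1) := by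
    congr 1
  rw [factor_getElem hm1 h1] at key
  rw [key]
  unfold RC
  rw [List.getElem_map, List.getElem_reverse]
  congr 1
  have hidx : (factor w j k).length - 1 - m = k - 1 - m := by rw [hl2]
  exact (getElem_idx_congr _ hidx _).trans (factor_getElem (by omega) h2)

lemma key_next : ∀ (bs : List (List Base)),
    (∀ b ∈ bs, b ∈ ([[A,A],[C,C],[A,C],[C,A],[T,C]] : List (List Base))) →
    ∀ i (h : i + 1 < bs.flatten.length), bs.flatten[i]'(by omega) = T →
      bs.flatten[i+1] = C := by
  intro bs
  induction bs with
  | nil => intro _ i h; simp at h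
  | cons b rest ih =>
    intro hS i h hT
    have hb := hS b (List.mem_cons_self)
    have hrest := fun x hx => hS x (List.mem_cons_of_mem _ hx)
    simp only [List.mem_cons, List.not_mem_nil, or_false] at hb
    match i with
    | 0 =>
      rcases hb with h'|h'|h'|h'|h' <;> subst h' <;> simp_all [List.flatten]
    | 1 =>
      rcases hb with h'|h'|h'|h'|h' <;> subst h' <;> simp_all [List.flatten]
    | (i+2) =>
      rcases hb with h'|h'|h'|h'|h' <;> subst h' <;>
      · simp only [List.flatten_cons, List.cons_append, List.nil_append,
          List.getElem_cons_succ, List.length_cons, List.length_append] at hT h ⊢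
        have hjf : rest.flatten.length = rest.flatten.length := rfl
        exact ih hrest i (by omega) hT

open Base in
theorem stmt6 (n : ℕ) (bs : List (List Base)) (hn : bs.length = n)
    (hS : ∀ b ∈ bs, b ∈ ([[A,A],[C,C],[A,C],[C,A],[T,C]] : List (List Base))) :
    SSA 3 bs.flatten := by
  intro k hk i j hik hjk _ heq
  set w := bs.flatten with hw
  have hnoG : ∀ p (hp : p < w.length), w[p] ≠ G := by
    intro p hp hG
    have hm : G ∈ w := hG ▸ List.getElem_mem hp
    rw [hw, List.mem_flatten] at hm
    obtain ⟨b, hb, hGb⟩ := hm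
    have hb2 := hS b hb
    simp only [List.mem_cons, List.not_mem_nil, or_false] at hb2
    rcases hb2 with h2|h2|h2|h2|h2 <;> subst h2 <;> simp at hGb
  have hTC : ∀ p (h : p + 1 < w.length), w[p]'(by omega) = T → w[p+1] = C :=
    key_next bs hS
  have hbG : ∀ x : Base, bcompl x = C → x = G := by intro x; cases x <;> simp [bcompl]
  have hj1 : j + 1 < w.length := by omega
  -- Step 1: w[j+1] = A
  have hA : w[j+1] = A := by
    rcases hx : w[j+1]'hj1 with _ | _ | _ | _
    · rfl
    · have hc : w[j+1+1] = C := hTC (j+1) (by omega) hx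
      have h3 : w[i+(k-3)]'(by omega) = bcompl (w[j+2]'(by omega)) :=
        eq_RC_getElem (m := k-3) (by omega) rfl (by omega) hik hjk heq (by omega) (by omega)
      exact absurd (h3.trans (congrArg bcompl hc)) (hnoG _ (by omega))
    · have h3 : w[i+(k-2)]'(by omega) = bcompl (w[j+1]'(by omega)) :=
        eq_RC_getElem (m := k-2) (by omega) rfl (by omega) hik hjk heq (by omega) (by omega)
      exact absurd (h3.trans (congrArg bcompl hx)) (hnoG _ (by omega))
    · exact absurd hx (hnoG _ hj1)
  -- Step 2: w[i+(k-2)] = T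
  have hT2 : w[i+(k-2)]'(by omega) = T := by
    have h3 : w[i+(k-2)]'(by omega) = bcompl (w[j+1]'(by omega)) :=
      eq_RC_getElem (m := k-2) (by omega) rfl (by omega) hik hjk heq (by omega) (by omega)
    exact h3.trans (congrArg bcompl hA)
  have hC2 : w[i+(k-2)+1] = C := hTC _ (by omega) hT2
  have h4 : w[i+(k-2)+1]'(by omega) = bcompl (w[j]'(by omega)) :=
    eq_RC_getElem (m := k-1) (by omega) (by omega) (by omega) hik hjk heq (by omega) (by omega)
  exact hnoG j (by omega) (hbG _ (h4.symm.trans hC2))
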